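/- Let E be a finite linearly ordered set with minimum element m, let M be a matroid on E, and let X, Y ⊆ E satisfy X ∪ Y = E and X ∩ Y = {m}. Then there exists exactly one basis B of M with the following two properties: (i) there do not exist b ∈ B and x ∈ X with b < x such that (B ∖ {b}) ∪ {x} is a basis of M; and (ii) there do not exist b ∈ B ∩ Y and z ∈ E with z < b such that (B ∖ {b}) ∪ {z} is a basis of M. -/

import Mathlib

/-- Let `E` be a finite linearly ordered set with minimum element `m`,
`M` a matroid on `E`, and `X, Y ⊆ E` with `X ∪ Y = E` and `X ∩ Y = {m}`. Then there is
exactly one basis `B` of `M` such that (i) no `b ∈ B` and `x ∈ X` with `b < x` give a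
basis `(B ∖ {b}) ∪ {x}`, and (ii) no `b ∈ B ∩ Y` and `z < b` give a basis
`(B ∖ {b}) ∪ {z}`. -/
theorem stmt_8 {α : Type*} [Fintype α] [LinearOrder α] [Nonempty α]
    (M : Matroid α) (hE : M.E = Set.univ)
    (m : α) (hm : ∀ i : α, m ≤ i)
    (X Y : Set α) (hXY : X ∪ Y = Set.univ) (hXYm : X ∩ Y = {m}) :
    ∃! B : Set α, M.IsBase B ∧
      (∀ b ∈ B, ∀ x ∈ X, b < x → ¬ M.IsBase (insert x (B \ {b}))) ∧
      (∀ b ∈ B ∩ Y, ∀ z : α, z < b → ¬ M.IsBase (insert z (B \ {b}))) := by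
  classical
  set n := Fintype.card α with hn
  have hn0 : 0 < n := Fintype.card_pos
  -- an order-preserving index
  set idx : α → ℕ := fun e => (Finset.univ.filter (fun a => a < e)).card with hidx
  have idx_mono : ∀ {a b : α}, a < b → idx a < idx b := by
    intro a b hab
    apply Finset.card_lt_card
    constructor
    · intro x hx
      simp only [Finset.mem_filter, Finset.mem_univ, true_and] at hx ⊢
      exact hx.trans hab
    · intro hsub
      have := hsub (by simp [hab] : a ∈ Finset.univ.filter (fun x => x < b))
      simp at this
  have idx_m : idx m = 0 := by
    simp only [hidx, Finset.card_eq_zero, Finset.filter_eq_empty_iff]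
    intro x _
    exact not_lt.2 (hm x)
  have idx_lt : ∀ e, idx e < n := by
    intro e
    have : (Finset.univ.filter (fun a => a < e)) ⊆ Finset.univ.erase e := by
      intro x hx
      simp only [Finset.mem_filter, Finset.mem_univ, true_and] at hx
      simp [ne_of_lt hx]
    calc idx e ≤ (Finset.univ.erase e).card := Finset.card_le_card this
      _ < n := by
          rw [Finset.card_erase_of_mem (Finset.mem_univ e)]
          exact Nat.sub_lt hn0 one_pos
  have idx_pos : ∀ e, e ≠ m → 0 < idx e := by
    intro e he
    have : idx m < idx e := idx_mono (lt_of_le_of_ne (hm e) (Ne.symm he))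
    omega
  -- the weight function
  set w : α → ℕ := fun e => if e = m then n else if e ∈ X then n + idx e else n - idx e
    with hw
  have mem_or : ∀ e : α, e ∈ X ∨ e ∈ Y := by
    intro e
    have : e ∈ X ∪ Y := by rw [hXY]; trivial
    exact this
  have notX_Y : ∀ e : α, e ∉ X → e ∈ Y := fun e he => (mem_or e).resolve_left he
  have inter : ∀ e : α, e ∈ X → e ∈ Y → e = m := by
    intro e h1 h2
    have : e ∈ X ∩ Y := ⟨h1, h2⟩
    rw [hXYm] at this
    exact this
  have hmX : m ∈ X := by
    have : m ∈ X ∩ Y := by rw [hXYm]; rfl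
    exact this.1
  have hmY : m ∈ Y := by
    have : m ∈ X ∩ Y := by rw [hXYm]; rfl
    exact this.2
  -- key characterization of "improving swaps"
  have key : ∀ b c : α, w b < w c ↔ ((c ∈ X ∧ b < c) ∨ (b ∈ Y ∧ c < b)) := by
    intro b c
    by_cases hb : b = m <;> by_cases hc : c = m
    · subst hb; subst hc; simp [hw]
    · subst hb
      by_cases hcX : c ∈ X
      · have : idx c > 0 := idx_pos c hc
        simp only [hw, if_neg hc, if_pos hcX, if_pos rfl]
        constructor
        · intro _; exact Or.inl ⟨hcX, lt_of_le_of_ne (hm c) (Ne.symm hc)⟩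
        · intro _; omega
      · have hcY := notX_Y c hcX
        have h1 : idx c > 0 := idx_pos c hc
        have h2 : idx c < n := idx_lt c
        simp only [hw, if_neg hc, if_neg hcX, if_pos rfl]
        constructor
        · intro h; omega
        · rintro (⟨h, _⟩ | ⟨_, h⟩)
          · exact absurd h hcX
          · exact absurd (hm c) (not_le.2 h)
    · subst hc
      by_cases hbX : b ∈ X
      · have h1 : idx b > 0 := idx_pos b hb
        simp only [hw, if_neg hb, if_pos hbX, if_pos rfl]
        constructor
        · intro h; omega
        · rintro (⟨_, h⟩ | ⟨hbY, _⟩)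
          · exact absurd (hm b) (not_le.2 h)
          · exact absurd (inter b hbX hbY) hb
      · have hbY := notX_Y b hbX
        have h1 : idx b > 0 := idx_pos b hb
        have h2 : idx b < n := idx_lt b
        simp only [hw, if_neg hb, if_neg hbX, if_pos rfl]
        constructor
        · intro _
          exact Or.inr ⟨hbY, lt_of_le_of_ne (hm b) (Ne.symm hb)⟩
        · intro _; omega
    · -- b ≠ m, c ≠ m
      have hb1 : idx b > 0 := idx_pos b hb
      have hb2 : idx b < n := idx_lt b
      have hc1 : idx c > 0 := idx_pos c hc
      have hc2 : idx c < n := idx_lt c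
      have idxiff : idx b < idx c ↔ b < c := by
        constructor
        · intro h
          by_contra hbc
          rcases lt_or_eq_of_le (not_lt.1 hbc) with h' | h'
          · exact absurd (idx_mono h') (by omega)
          · subst h'; omega
        · exact idx_mono
      by_cases hbX : b ∈ X <;> by_cases hcX : c ∈ X
      · -- both in X
        have hbY : b ∉ Y := fun h => hb (inter b hbX h)
        simp only [hw, if_neg hb, if_neg hc, if_pos hbX, if_pos hcX]
        constructor
        · intro h
          exact Or.inl ⟨hcX, idxiff.1 (by omega)⟩
        · rintro (⟨_, h⟩ | ⟨h, _⟩)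
          · have := idxiff.2 h; omega
          · exact absurd h hbY
      · -- b ∈ X, c ∈ Y \ {m}
        have hbY : b ∉ Y := fun h => hb (inter b hbX h)
        simp only [hw, if_neg hb, if_neg hc, if_pos hbX, if_neg hcX]
        constructor
        · intro h; omega
        · rintro (⟨h, _⟩ | ⟨h, _⟩)
          · exact absurd h hcX
          · exact absurd h hbY
      · -- b ∈ Y \ {m}, c ∈ X
        have hbY := notX_Y b hbX
        simp only [hw, if_neg hb, if_neg hc, if_neg hbX, if_pos hcX]
        constructor
        · intro _
          rcases lt_trichotomy b c with h | h | h
          · exact Or.inl ⟨hcX, h⟩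
          · subst h; exact absurd hcX hbX
          · exact Or.inr ⟨hbY, h⟩
        · intro _; omega
      · -- both in Y \ {m}
        have hbY := notX_Y b hbX
        simp only [hw, if_neg hb, if_neg hc, if_neg hbX, if_neg hcX]
        constructor
        · intro h
          have : idx c < idx b := by omega
          have : c < b := by
            by_contra hcb
            rcases lt_or_eq_of_le (not_lt.1 hcb) with h' | h'
            · exact absurd (idx_mono h') (by omega)
            · subst h'; omega
          exact Or.inr ⟨hbY, this⟩
        · rintro (⟨h, _⟩ | ⟨_, h⟩)
          · exact absurd h hcX
          · have := idx_mono h; omega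
  -- w separates points
  have wne : ∀ b c : α, b ≠ c → w b ≠ w c := by
    intro b c hbc
    rcases lt_or_gt_of_ne hbc with h | h
    · rcases mem_or c with hc | hc
      · exact ne_of_lt ((key b c).2 (Or.inl ⟨hc, h⟩))
      · exact (ne_of_lt ((key c b).2 (Or.inr ⟨hc, h⟩))).symm
    · rcases mem_or b with hb | hb
      · exact (ne_of_lt ((key c b).2 (Or.inl ⟨hb, h⟩))).symm
      · exact ne_of_lt ((key b c).2 (Or.inr ⟨hb, h⟩))
  -- the "locally optimal" predicate
  set P : Set α → Prop :=
    fun B => ∀ b ∈ B, ∀ c : α, w b < w c → ¬ M.IsBase (insert c (B \ {b})) with hP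
  -- P is equivalent to the two conditions of the statement
  have Pequiv : ∀ B : Set α, P B ↔
      ((∀ b ∈ B, ∀ x ∈ X, b < x → ¬ M.IsBase (insert x (B \ {b}))) ∧
       (∀ b ∈ B ∩ Y, ∀ z : α, z < b → ¬ M.IsBase (insert z (B \ {b})))) := by
    intro B
    constructor
    · intro h
      constructor
      · intro b hb x hx hbx
        exact h b hb x ((key b x).2 (Or.inl ⟨hx, hbx⟩))
      · intro b hb z hz
        exact h b hb.1 z ((key b z).2 (Or.inr ⟨hb.2, hz⟩))
    · rintro ⟨h1, h2⟩ b hb c hwc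
      rcases (key b c).1 hwc with ⟨hcX, hbc⟩ | ⟨hbY, hcb⟩
      · exact h1 b hb c hcX hbc
      · exact h2 b ⟨hb, hbY⟩ c hcb
  -- weight of a finset
  set f : Finset α → ℕ := fun s => ∑ e ∈ s, 2 ^ (w e) with hf
  -- Existence: take a base maximizing f
  obtain ⟨B₀, hB₀⟩ := M.exists_isBase
  have hne : (Finset.univ.filter (fun s : Finset α => M.IsBase ↑s)).Nonempty := by
    refine ⟨(Set.toFinite B₀).toFinset, ?_⟩
    simp only [Finset.mem_filter, Finset.mem_univ, true_and, Set.Finite.coe_toFinset]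
    exact hB₀
  obtain ⟨Bf, hBf, hBfmax⟩ :=
    Finset.exists_max_image (Finset.univ.filter (fun s : Finset α => M.IsBase ↑s)) f hne
  simp only [Finset.mem_filter, Finset.mem_univ, true_and] at hBf
  have hBfmax' : ∀ s : Finset α, M.IsBase ↑s → f s ≤ f Bf := by
    intro s hs
    exact hBfmax s (by simp [hs])
  -- Bf is locally optimal
  have hPBf : P (↑Bf : Set α) := by
    intro b hb c hwc hBase
    have hbc : b ≠ c := fun h => by subst h; exact lt_irrefl _ hwc
    have hcB : c ∉ (Bf : Set α) := by
      intro hc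
      have hsub : insert c ((Bf : Set α) \ {b}) ⊆ (Bf : Set α) := by
        intro x hx
        rcases hx with rfl | hx
        · exact hc
        · exact hx.1
      have heq := hBase.eq_of_subset_isBase hBf hsub
      have hbmem : b ∈ insert c ((Bf : Set α) \ {b}) := by rw [heq]; exact hb
      rcases hbmem with h | h
      · exact hbc h
      · exact h.2 rfl
    -- the new finset
    have hbBf : b ∈ Bf := hb
    have hcBf : c ∉ Bf := fun h => hcB h
    have hset : (insert c ((Bf : Set α) \ {b})) = ((insert c (Bf.erase b) : Finset α) : Set α) := by
      ext x
      simp [Finset.coe_insert, Finset.coe_erase, and_comm]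
    rw [hset] at hBase
    have hle := hBfmax' _ hBase
    have hcne : c ∉ Bf.erase b := fun h => hcBf (Finset.mem_of_mem_erase h)
    have hsum1 : f (insert c (Bf.erase b)) = 2 ^ (w c) + f (Bf.erase b) := by
      simp only [hf]; rw [Finset.sum_insert hcne]
    have hsum2 : f (Bf.erase b) + 2 ^ (w b) = f Bf := by
      simp only [hf]; exact Finset.sum_erase_add _ _ hbBf
    have hpow : (2 : ℕ) ^ (w b) < 2 ^ (w c) := Nat.pow_lt_pow_right one_lt_two hwc
    omega
  -- Uniqueness helper: two locally optimal bases are equal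
  have uniq_aux : ∀ B₁ B₂ : Set α, M.IsBase B₁ → M.IsBase B₂ → P B₁ → P B₂ → B₁ = B₂ := by
    intro B₁ B₂ hB₁ hB₂ hP₁ hP₂
    by_contra hne12
    -- symmetric difference as a finset
    set D : Finset α := Finset.univ.filter
      (fun x => (x ∈ B₁ ∧ x ∉ B₂) ∨ (x ∈ B₂ ∧ x ∉ B₁)) with hD
    have hDne : D.Nonempty := by
      by_contra hDe
      apply hne12
      ext x
      rw [Finset.not_nonempty_iff_eq_empty] at hDe
      have : x ∉ D := by rw [hDe]; exact Finset.notMem_empty x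
      simp only [hD, Finset.mem_filter, Finset.mem_univ, true_and] at this
      push_neg at this
      exact ⟨this.1, this.2⟩
    obtain ⟨e, heD, hemin⟩ := Finset.exists_min_image D w hDne
    simp only [hD, Finset.mem_filter, Finset.mem_univ, true_and] at heD
    have hmin' : ∀ x : α, ((x ∈ B₁ ∧ x ∉ B₂) ∨ (x ∈ B₂ ∧ x ∉ B₁)) → w e ≤ w x := by
      intro x hx
      exact hemin x (by simp [hD, hx])
    rcases heD with he | he
    · -- e ∈ B₁ \ B₂ : exchange within B₁
      obtain ⟨y, hy, hBase⟩ := hB₁.exchange hB₂ he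
      have hye : y ≠ e := fun h => he.2 (h ▸ hy.1)
      have hwle : w e ≤ w y := hmin' y (Or.inr ⟨hy.1, hy.2⟩)
      have hwlt : w e < w y := lt_of_le_of_ne hwle (Ne.symm (wne y e hye))
      exact hP₁ e he.1 y hwlt hBase
    · -- e ∈ B₂ \ B₁ : exchange within B₂
      obtain ⟨y, hy, hBase⟩ := hB₂.exchange hB₁ he
      have hye : y ≠ e := fun h => he.2 (h ▸ hy.1)
      have hwle : w e ≤ w y := hmin' y (Or.inl ⟨hy.1, hy.2⟩)
      have hwlt : w e < w y := lt_of_le_of_ne hwle (Ne.symm (wne y e hye))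
      exact hP₂ e he.1 y hwlt hBase
  refine ⟨(↑Bf : Set α), ⟨hBf, (Pequiv _).1 hPBf⟩, ?_⟩
  rintro B ⟨hB, hcond⟩
  exact uniq_aux B (↑Bf) hB hBf ((Pequiv B).2 hcond) hPBf
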